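/- Let n, m, r be positive integers with r ≤ min{n, m}, and suppose that for each pair of dimensions, S_{n,r} is an open and dense subset of ℝ^{n×r} and S_{r,m} is an open and dense subset of ℝ^{r×m}. Then the set S_{n,r} · S_{r,m} = { C·D : C ∈ S_{n,r}, D ∈ S_{r,m} } is open and dense in M_r = { A ∈ ℝ^{n×m} : rank A = r }, where M_r carries the subspace topology inherited from ℝ^{n×m}. -/

import Mathlib

open Matrix Module Set

open Matrix Module Set

variable {n m r q : ℕ}

/-- A square matrix of full rank has invertible determinant. -/
lemma aux_sq_isUnit_det (M : Matrix (Fin r) (Fin r) ℝ) (h : M.rank = r) :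
    IsUnit M.det := by
  have hfr : finrank ℝ (LinearMap.range M.mulVecLin) = r := h
  have htop : LinearMap.range M.mulVecLin = ⊤ := by
    apply Submodule.eq_top_of_finrank_eq
    rw [hfr, finrank_pi]; simp
  have hsurj : Function.Surjective M.mulVecLin := LinearMap.range_eq_top.mp htop
  choose x hx using fun j => hsurj (Pi.single j 1)
  have hMB : M * (Matrix.of fun k j => x j k) = 1 := by
    ext i j
    have := congrFun (hx j) i
    simp only [mulVecLin_apply] at this
    simp only [Matrix.mul_apply, Matrix.one_apply, Matrix.of_apply]
    rw [show (∑ k, M i k * x j k) = M.mulVec (x j) i from rfl, this, Pi.single_apply]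
  have := congrArg Matrix.det hMB
  rw [Matrix.det_mul, Matrix.det_one] at this
  exact IsUnit.of_mul_eq_one _ this

/-- Full column rank iff `det (Cᵀ * C) ≠ 0`. -/
lemma aux_rank_iff_det (C : Matrix (Fin n) (Fin r) ℝ) :
    C.rank = r ↔ (Cᵀ * C).det ≠ 0 := by
  constructor
  · intro h
    have h2 : (Cᵀ * C).rank = r := by rw [Matrix.rank_transpose_mul_self, h]
    exact (aux_sq_isUnit_det _ h2).ne_zero
  · intro h
    have h2 : (Cᵀ * C).rank = r := by
      rw [Matrix.rank_of_isUnit _ ((Matrix.isUnit_iff_isUnit_det _).mpr (isUnit_iff_ne_zero.mpr h))]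
      simp
    rw [← Matrix.rank_transpose_mul_self, h2]

/-- Full row rank iff `det (D * Dᵀ) ≠ 0`. -/
lemma aux_rank_iff_det' (D : Matrix (Fin r) (Fin m) ℝ) :
    D.rank = r ↔ (D * Dᵀ).det ≠ 0 := by
  rw [← Matrix.rank_transpose, aux_rank_iff_det Dᵀ, Matrix.transpose_transpose]

/-- Product of full-rank factors has rank `r`. -/
lemma aux_rank_mul (C : Matrix (Fin n) (Fin r) ℝ) (D : Matrix (Fin r) (Fin m) ℝ)
    (hC : C.rank = r) (hD : D.rank = r) : (C * D).rank = r := by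
  have htop : LinearMap.range D.mulVecLin = ⊤ := by
    apply Submodule.eq_top_of_finrank_eq
    rw [show finrank ℝ (LinearMap.range D.mulVecLin) = r from hD, finrank_pi]; simp
  have : (C * D).rank = C.rank := by
    unfold Matrix.rank
    rw [Matrix.mulVecLin_mul, LinearMap.range_comp_of_range_eq_top _ htop]
  rw [this, hC]

/-- If the column space of `A` is contained in that of `B`, then `A` factors through `B`. -/
lemma aux_factor (A : Matrix (Fin n) (Fin m) ℝ) (B : Matrix (Fin n) (Fin q) ℝ)
    (h : LinearMap.range A.mulVecLin ≤ LinearMap.range B.mulVecLin) :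
    ∃ X : Matrix (Fin q) (Fin m) ℝ, A = B * X := by
  have hcol : ∀ j, ∃ x, B.mulVec x = A.mulVec (Pi.single j 1) := by
    intro j
    obtain ⟨x, hx⟩ := h (LinearMap.mem_range_self A.mulVecLin (Pi.single j 1))
    exact ⟨x, hx⟩
  choose x hx using hcol
  refine ⟨Matrix.of fun k j => x j k, ?_⟩
  ext i j
  have := congrFun (hx j) i
  rw [Matrix.mulVec_single_one] at this
  simp only [Matrix.mul_apply, Matrix.of_apply]
  rw [show (∑ k, B i k * x j k) = B.mulVec (x j) i from rfl, this, Matrix.col_apply]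

open Matrix Module Set

/-- Full rank factorization: a rank-`r` matrix factors as a product of an `n×r` matrix of rank `r`
and an `r×m` matrix. -/
lemma aux_full_rank_factorization {n m r : ℕ} (A : Matrix (Fin n) (Fin m) ℝ) (h : A.rank = r) :
    ∃ (C : Matrix (Fin n) (Fin r) ℝ) (D : Matrix (Fin r) (Fin m) ℝ),
      C.rank = r ∧ A = C * D := by
  have hfr : finrank ℝ (LinearMap.range A.mulVecLin) = r := h
  let b : Basis (Fin r) ℝ (LinearMap.range A.mulVecLin) := finBasisOfFinrankEq ℝ _ hfr
  let C : Matrix (Fin n) (Fin r) ℝ := Matrix.of fun i k => (b k : Fin n → ℝ) i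
  have hv : ∀ j, A.mulVec (Pi.single j 1) ∈ LinearMap.range A.mulVecLin :=
    fun j => LinearMap.mem_range_self _ _
  let v : Fin m → LinearMap.range A.mulVecLin := fun j => ⟨A.mulVec (Pi.single j 1), hv j⟩
  let D : Matrix (Fin r) (Fin m) ℝ := Matrix.of fun k j => b.repr (v j) k
  have hmulvec : ∀ (x : Fin r → ℝ), C.mulVec x = ((∑ k, x k • b k : LinearMap.range A.mulVecLin) : Fin n → ℝ) := by
    intro x
    ext i
    rw [Submodule.coe_sum]
    simp only [Matrix.mulVec, dotProduct, Finset.sum_apply]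
    refine Finset.sum_congr rfl fun k _ => ?_
    simp [C, mul_comm]
  refine ⟨C, D, ?_, ?_⟩
  · -- rank C = r
    have hinj : Function.Injective C.mulVecLin := by
      rw [← LinearMap.ker_eq_bot, eq_bot_iff]
      intro x hx
      simp only [LinearMap.mem_ker, mulVecLin_apply] at hx
      rw [hmulvec] at hx
      have : (∑ k, x k • b k : LinearMap.range A.mulVecLin) = 0 := by
        exact Subtype.ext hx
      have hx0 : ∀ k, x k = 0 := by
        have := linearIndependent_iff'.mp b.linearIndependent Finset.univ x
          (by simpa using this)
        intro k; exact this k (Finset.mem_univ k)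
      simpa using (funext hx0 : x = 0)
    have : finrank ℝ (LinearMap.range C.mulVecLin) + finrank ℝ (LinearMap.ker C.mulVecLin)
        = finrank ℝ (Fin r → ℝ) := LinearMap.finrank_range_add_finrank_ker _
    rw [LinearMap.ker_eq_bot.mpr hinj] at this
    simp only [finrank_bot, add_zero, finrank_pi, Fintype.card_fin] at this
    exact this
  · -- A = C * D
    ext i j
    have hsum := b.sum_repr (v j)
    have := congrFun (congrArg (Subtype.val) hsum) i
    rw [Submodule.coe_sum] at this
    simp only [Finset.sum_apply] at this
    have hvj : (A.mulVec (Pi.single j 1)) i = A i j := by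
      rw [Matrix.mulVec_single_one]; rfl
    rw [show ((v j : LinearMap.range A.mulVecLin) : Fin n → ℝ) i = A i j from hvj] at this
    rw [Matrix.mul_apply, ← this]
    refine Finset.sum_congr rfl fun k _ => ?_
    simp [C, D, mul_comm]

open Matrix Module Set

lemma aux_continuousAt_inv {r : ℕ} {X : Type*} [TopologicalSpace X]
    {f : X → Matrix (Fin r) (Fin r) ℝ} (hf : Continuous f) {x₀ : X}
    (h : (f x₀).det ≠ 0) : ContinuousAt (fun x => (f x)⁻¹) x₀ := by
  have heq : (fun x => (f x)⁻¹) = fun x => ((f x).det)⁻¹ • (f x).adjugate := by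
    funext x; rw [Matrix.inv_def, Ring.inverse_eq_inv']
  rw [heq]
  exact ((hf.matrix_det.continuousAt).inv₀ h).smul (hf.matrix_adjugate.continuousAt)

open Matrix
lemma aux_recover' {n m r : ℕ} (C : Matrix (Fin n) (Fin r) ℝ) (X : Matrix (Fin r) (Fin m) ℝ)
    (hdet : IsUnit (Cᵀ * C).det) :
    (Cᵀ * C)⁻¹ * (Cᵀ * (C * X)) = X := by
  rw [← Matrix.mul_assoc Cᵀ C X, ← Matrix.mul_assoc ((Cᵀ * C)⁻¹) (Cᵀ * C) X,
    Matrix.nonsing_inv_mul _ hdet, Matrix.one_mul]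


/-- Let `r ≤ min{n,m}`, let `S₁` be an open dense subset of `ℝ^{n×r}` and `S₂`
an open dense subset of `ℝ^{r×m}`. Then `S₁ · S₂ = { C·D : C ∈ S₁, D ∈ S₂ }` is open and dense
in `M_r = { A ∈ ℝ^{n×m} : rank A = r }` with the subspace topology. -/
theorem product_of_open_dense_factor_sets (n m r : ℕ)
    (hn : 0 < n) (hm : 0 < m) (hr : 0 < r) (hrn : r ≤ n) (hrm : r ≤ m)
    (S₁ : Set (Matrix (Fin n) (Fin r) ℝ)) (S₂ : Set (Matrix (Fin r) (Fin m) ℝ))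
    (hS₁o : IsOpen S₁) (hS₁d : Dense S₁) (hS₂o : IsOpen S₂) (hS₂d : Dense S₂) :
    IsOpen {A : {A : Matrix (Fin n) (Fin m) ℝ // A.rank = r} |
        ∃ C ∈ S₁, ∃ D ∈ S₂, (A : Matrix (Fin n) (Fin m) ℝ) = C * D} ∧
    Dense {A : {A : Matrix (Fin n) (Fin m) ℝ // A.rank = r} |
        ∃ C ∈ S₁, ∃ D ∈ S₂, (A : Matrix (Fin n) (Fin m) ℝ) = C * D} := by
  constructor
  · -- Openness
    rw [isOpen_iff_forall_mem_open]
    rintro ⟨A₀, hA₀⟩ ⟨C₀, hC₀S, D₀, hD₀S, hA₀eq⟩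
    simp only at hA₀eq
    have hrC₀ : C₀.rank = r := le_antisymm (Matrix.rank_le_width C₀) (by
      calc r = A₀.rank := hA₀.symm
        _ = (C₀ * D₀).rank := by rw [hA₀eq]
        _ ≤ C₀.rank := Matrix.rank_mul_le_left C₀ D₀)
    have hrD₀ : D₀.rank = r := le_antisymm (Matrix.rank_le_height D₀) (by
      calc r = A₀.rank := hA₀.symm
        _ = (C₀ * D₀).rank := by rw [hA₀eq]
        _ ≤ D₀.rank := Matrix.rank_mul_le_right C₀ D₀)
    have hDDT : IsUnit (D₀ * D₀ᵀ).det :=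
      isUnit_iff_ne_zero.mpr ((aux_rank_iff_det' D₀).mp hrD₀)
    have hCCdet : IsUnit (C₀ᵀ * C₀).det :=
      isUnit_iff_ne_zero.mpr ((aux_rank_iff_det C₀).mp hrC₀)
    obtain ⟨P, hP⟩ : ∃ P : Matrix (Fin m) (Fin r) ℝ, A₀ * P = C₀ := by
      refine ⟨D₀ᵀ * (D₀ * D₀ᵀ)⁻¹, ?_⟩
      rw [hA₀eq, Matrix.mul_assoc, ← Matrix.mul_assoc D₀,
        Matrix.mul_nonsing_inv _ hDDT, Matrix.mul_one]
    have hΦc : Continuous fun A : Matrix (Fin n) (Fin m) ℝ => A * P :=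
      continuous_id.matrix_mul continuous_const
    have hGc : Continuous fun A : Matrix (Fin n) (Fin m) ℝ => (A * P)ᵀ * (A * P) :=
      hΦc.matrix_transpose.matrix_mul hΦc
    have hΨca : ∀ A₁ : Matrix (Fin n) (Fin m) ℝ, ((A₁ * P)ᵀ * (A₁ * P)).det ≠ 0 →
        ContinuousAt (fun A : Matrix (Fin n) (Fin m) ℝ =>
          ((A * P)ᵀ * (A * P))⁻¹ * ((A * P)ᵀ * A)) A₁ := by
      intro A₁ hd
      have h1 : ContinuousAt (fun A : Matrix (Fin n) (Fin m) ℝ => ((A * P)ᵀ * (A * P))⁻¹) A₁ :=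
        aux_continuousAt_inv hGc hd
      have h2 : Continuous fun A : Matrix (Fin n) (Fin m) ℝ => (A * P)ᵀ * A :=
        hΦc.matrix_transpose.matrix_mul continuous_id
      exact ((continuous_fst.matrix_mul continuous_snd).continuousAt).comp
        (h1.prodMk h2.continuousAt)
    have hUo : IsOpen {A : Matrix (Fin n) (Fin m) ℝ | A * P ∈ S₁ ∧
        ((A * P)ᵀ * (A * P))⁻¹ * ((A * P)ᵀ * A) ∈ S₂ ∧ ((A * P)ᵀ * (A * P)).det ≠ 0} := by
      rw [isOpen_iff_mem_nhds]
      rintro A₁ ⟨h1, h2, h3⟩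
      have m1 : (fun A : Matrix (Fin n) (Fin m) ℝ => A * P) ⁻¹' S₁ ∈ nhds A₁ :=
        hΦc.continuousAt.preimage_mem_nhds (hS₁o.mem_nhds h1)
      have m2 : (fun A : Matrix (Fin n) (Fin m) ℝ =>
          ((A * P)ᵀ * (A * P))⁻¹ * ((A * P)ᵀ * A)) ⁻¹' S₂ ∈ nhds A₁ :=
        (hΨca A₁ h3).preimage_mem_nhds (hS₂o.mem_nhds h2)
      have m3 : {A : Matrix (Fin n) (Fin m) ℝ | ((A * P)ᵀ * (A * P)).det ≠ 0} ∈ nhds A₁ :=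
        (isOpen_compl_singleton.preimage hGc.matrix_det).mem_nhds h3
      exact Filter.mem_of_superset (Filter.inter_mem (Filter.inter_mem m1 m2) m3)
        (fun x hx => ⟨hx.1.1, hx.1.2, hx.2⟩)
    refine ⟨Subtype.val ⁻¹' {A : Matrix (Fin n) (Fin m) ℝ | A * P ∈ S₁ ∧
        ((A * P)ᵀ * (A * P))⁻¹ * ((A * P)ᵀ * A) ∈ S₂ ∧ ((A * P)ᵀ * (A * P)).det ≠ 0},
      ?_, hUo.preimage continuous_subtype_val, ?_, ?_, ?_⟩
    · -- the preimage is contained in the set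
      rintro ⟨A, hA⟩ ⟨h1, h2, h3⟩
      have hrC : (A * P).rank = r := (aux_rank_iff_det (A * P)).mpr h3
      have hle : LinearMap.range (A * P).mulVecLin ≤ LinearMap.range A.mulVecLin := by
        rw [Matrix.mulVecLin_mul]
        exact LinearMap.range_comp_le_range _ _
      have heq : LinearMap.range (A * P).mulVecLin = LinearMap.range A.mulVecLin := by
        apply Submodule.eq_of_le_of_finrank_le hle
        rw [show finrank ℝ (LinearMap.range A.mulVecLin) = r from hA,
          show finrank ℝ (LinearMap.range (A * P).mulVecLin) = r from hrC]
      obtain ⟨X, hAX⟩ := aux_factor A (A * P) heq.ge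
      have hdet : IsUnit ((A * P)ᵀ * (A * P)).det := isUnit_iff_ne_zero.mpr h3
      refine ⟨A * P, h1, ((A * P)ᵀ * (A * P))⁻¹ * ((A * P)ᵀ * A), h2, ?_⟩
      show A = (A * P) * (((A * P)ᵀ * (A * P))⁻¹ * ((A * P)ᵀ * A))
      calc A = (A * P) * X := hAX
        _ = (A * P) * (((A * P)ᵀ * (A * P))⁻¹ * ((A * P)ᵀ * ((A * P) * X))) := by
              rw [aux_recover' _ _ hdet]
        _ = (A * P) * (((A * P)ᵀ * (A * P))⁻¹ * ((A * P)ᵀ * A)) := by rw [← hAX]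
    · show A₀ * P ∈ S₁
      rw [hP]; exact hC₀S
    · show ((A₀ * P)ᵀ * (A₀ * P))⁻¹ * ((A₀ * P)ᵀ * A₀) ∈ S₂
      have : ((A₀ * P)ᵀ * (A₀ * P))⁻¹ * ((A₀ * P)ᵀ * A₀) = D₀ := by
        rw [hP, hA₀eq]
        exact aux_recover' _ _ hCCdet
      rw [this]; exact hD₀S
    · show ((A₀ * P)ᵀ * (A₀ * P)).det ≠ 0
      rw [hP]
      exact (aux_rank_iff_det C₀).mp hrC₀
  · -- Density
    rw [dense_iff_inter_open]
    rintro W hW ⟨⟨A, hA⟩, hAW⟩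
    obtain ⟨U, hUo, hUeq⟩ := isOpen_induced_iff.mp hW
    have hAU : A ∈ U := by
      rw [← hUeq] at hAW; exact hAW
    obtain ⟨C₀, D₀, hrC₀, hA₀eq⟩ := aux_full_rank_factorization A hA
    have hrD₀ : D₀.rank = r := le_antisymm (Matrix.rank_le_height D₀) (by
      calc r = A.rank := hA.symm
        _ = (C₀ * D₀).rank := by rw [hA₀eq]
        _ ≤ D₀.rank := Matrix.rank_mul_le_right C₀ D₀)
    set O : Set (Matrix (Fin n) (Fin r) ℝ × Matrix (Fin r) (Fin m) ℝ) :=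
      {p | p.1 * p.2 ∈ U ∧ (p.1ᵀ * p.1).det ≠ 0 ∧ (p.2 * p.2ᵀ).det ≠ 0} with hOdef
    have hOo : IsOpen O := by
      refine IsOpen.inter (hUo.preimage (continuous_fst.matrix_mul continuous_snd)) ?_
      refine IsOpen.inter ?_ ?_
      · exact isOpen_compl_singleton.preimage
          ((continuous_fst.matrix_transpose.matrix_mul continuous_fst).matrix_det)
      · exact isOpen_compl_singleton.preimage
          ((continuous_snd.matrix_mul continuous_snd.matrix_transpose).matrix_det)
    have hOne : O.Nonempty := by
      refine ⟨(C₀, D₀), ?_, ?_, ?_⟩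
      · show C₀ * D₀ ∈ U; rw [← hA₀eq]; exact hAU
      · exact (aux_rank_iff_det C₀).mp hrC₀
      · exact (aux_rank_iff_det' D₀).mp hrD₀
    obtain ⟨⟨C, D⟩, hpS, hpO⟩ := (hS₁d.prod hS₂d).exists_mem_open hOo hOne
    obtain ⟨hCU, hCd, hDd⟩ := hpO
    have hrCD : (C * D).rank = r :=
      aux_rank_mul C D ((aux_rank_iff_det C).mpr hCd) ((aux_rank_iff_det' D).mpr hDd)
    refine ⟨⟨C * D, hrCD⟩, ?_, ?_⟩
    · rw [← hUeq]; exact hCU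
    · exact ⟨C, hpS.1, D, hpS.2, rfl⟩
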